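/- Let $H$ be a finite abelian $p$-group of type $\nu$ with $\ell(\nu) = r$ parts (all parts at least $1$), let $k \geq 1$ with $p^k H = 0$, set $R = \mathbb{Z}/p^k\mathbb{Z}$ and $V = R^n$ with $n \geq r$. Let $F_1 \colon V \to H$ be a surjective $R$-module homomorphism. Then there exists a basis $\{z_1, \dots, z_n\}$ of the free $R$-module $V$ such that $\ker F_1$ is generated by $p^{\nu_1} z_1, \dots, p^{\nu_r} z_r, z_{r+1}, \dots, z_n$. -/

import Mathlib

open Function Submodule

section helpers
variable {q : ℕ} [NeZero q]

lemma zmod_smul_eq_nsmul {M : Type*} [AddCommGroup M] [Module (ZMod q) M] (c : ZMod q) (x : M) :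
    c • x = c.val • x := by
  have h : ((c.val : ℕ) : ZMod q) = c := by rw [ZMod.natCast_val, ZMod.cast_id]
  conv_lhs => rw [← h]
  rw [Nat.cast_smul_eq_nsmul]

lemma zmod_pi_smul_apply {s : ℕ} {μ : Fin s → ℕ} [iM : Module (ZMod q) (∀ j, ZMod (μ j))]
    (c : ZMod q) (x : ∀ j, ZMod (μ j)) (j : Fin s) :
    (c • x) j = (c.val : ZMod (μ j)) * x j := by
  rw [zmod_smul_eq_nsmul]
  have h : (c.val • x) j = c.val • (x j) :=
    map_nsmul (Pi.evalAddMonoidHom (fun j => ZMod (μ j)) j) c.val x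
  rw [h, nsmul_eq_mul]

lemma val_cast_eq_castHom {μ : ℕ} (h : μ ∣ q) (c : ZMod q) :
    ((c.val : ℕ) : ZMod μ) = ZMod.castHom h (ZMod μ) c := by
  rw [ZMod.natCast_val, ZMod.castHom_apply]

lemma unit_or_p_dvd (p k : ℕ) (hp : p.Prime) (x : ZMod (p ^ k)) :
    IsUnit x ∨ (p : ZMod (p ^ k)) ∣ x := by
  haveI : NeZero p := ⟨hp.pos.ne'⟩
  have hx : ((x.val : ℕ) : ZMod (p ^ k)) = x := by rw [ZMod.natCast_val, ZMod.cast_id]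
  by_cases h : p ∣ x.val
  · right
    obtain ⟨y, hy⟩ := h
    exact ⟨(y : ZMod (p ^ k)), by rw [← hx, hy]; push_cast; ring⟩
  · left
    have hcop : Nat.Coprime x.val (p ^ k) :=
      Nat.Coprime.pow_right k (((hp.coprime_iff_not_dvd).2 h).symm)
    rw [← hx]
    exact (ZMod.isUnit_iff_coprime x.val (p ^ k)).2 hcop

end helpers

lemma pk_nsmul_zero (p k : ℕ) {s : ℕ} (μ : Fin s → ℕ)
    (x : ∀ j, ZMod (p ^ min (μ j) k)) : (p ^ k) • x = 0 := by
  funext j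
  have h : ((p ^ k) • x) j = (p ^ k) • x j :=
    map_nsmul (Pi.evalAddMonoidHom (fun j => ZMod (p ^ min (μ j) k)) j) (p ^ k) x
  rw [h, nsmul_eq_mul, (ZMod.natCast_eq_zero_iff (p ^ k) (p ^ min (μ j) k)).2
    (pow_dvd_pow p (min_le_right _ _)), zero_mul]
  rfl

noncomputable instance piZModMin (p k s : ℕ) (μ : Fin s → ℕ) :
    Module (ZMod (p ^ k)) (∀ j : Fin s, ZMod (p ^ min (μ j) k)) :=
  AddCommGroup.zmodModule (pk_nsmul_zero p k μ)

lemma dvd_repr_of_mem_span {R M : Type*} [CommRing R] [AddCommGroup M] [Module R M]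
    {m : ℕ} (b : Module.Basis (Fin m) R M) (D : Fin m → R) {x : M}
    (hx : x ∈ span R (Set.range fun j => D j • b j)) (j : Fin m) : D j ∣ b.repr x j := by
  let Sub : Submodule R M :=
  { carrier := {y | D j ∣ b.repr y j}
    add_mem' := fun {a c} ha hc => by
      simp only [Set.mem_setOf_eq, map_add, Finsupp.add_apply] at *
      exact dvd_add ha hc
    zero_mem' := by simp
    smul_mem' := fun c y hy => by
      simp only [Set.mem_setOf_eq, map_smul, Finsupp.smul_apply, smul_eq_mul] at *
      exact hy.mul_left c }
  have hle : span R (Set.range fun j => D j • b j) ≤ Sub := by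
    rw [span_le]
    rintro _ ⟨j0, rfl⟩
    show D j ∣ b.repr (D j0 • b j0) j
    rw [map_smul, Finsupp.smul_apply, Module.Basis.repr_self, smul_eq_mul, Finsupp.single_apply]
    rcases eq_or_ne j0 j with rfl | hne
    · simp
    · rw [if_neg hne, mul_zero]
      exact dvd_zero _
  exact hle hx

lemma basis_of_span {m : ℕ} {R : Type*} [CommRing R] [Finite R] (z : Fin m → (Fin m → R))
    (hz : ⊤ ≤ span R (Set.range z)) :
    ∃ b : Module.Basis (Fin m) R (Fin m → R), ∀ i, b i = z i := by
  let Φ := (Pi.basisFun R (Fin m)).constr ℕ z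
  have hsurj : Function.Surjective Φ := by
    rw [← LinearMap.range_eq_top, Module.Basis.constr_range]
    exact top_le_iff.1 hz
  have hbij : Function.Bijective Φ := ⟨Finite.injective_iff_surjective.2 hsurj, hsurj⟩
  exact ⟨(Pi.basisFun R (Fin m)).map (LinearEquiv.ofBijective Φ hbij), fun i => by
    rw [Module.Basis.map_apply, LinearEquiv.ofBijective_apply]
    exact (Pi.basisFun R (Fin m)).constr_basis ℕ z i⟩

lemma key (p k : ℕ) (hp : p.Prime) (hk : 1 ≤ k) :
    ∀ (r n : ℕ) (ν : Fin r → ℕ)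
      (F : (Fin n → ZMod (p ^ k)) →ₗ[ZMod (p ^ k)] (∀ j : Fin r, ZMod (p ^ min (ν j) k))),
      r ≤ n → Antitone ν → (∀ j, 1 ≤ ν j) → (∀ j, ν j ≤ k) → Function.Surjective F →
      ∃ b : Module.Basis (Fin n) (ZMod (p ^ k)) (Fin n → ZMod (p ^ k)),
        LinearMap.ker F = Submodule.span (ZMod (p ^ k))
          (Set.range (fun i : Fin n =>
            if h : (i : ℕ) < r then ((p : ZMod (p ^ k)) ^ ν ⟨i, h⟩) • b i else b i)) := by
  intro r
  induction r with
  | zero =>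
    intro n ν F _ _ _ _ _
    refine ⟨Pi.basisFun _ _, ?_⟩
    have h1 : LinearMap.ker F = ⊤ := by
      ext x
      simp [LinearMap.mem_ker, Subsingleton.elim (F x) 0]
    have h2 : (fun i : Fin n => if h : (i : ℕ) < 0 then
          ((p : ZMod (p ^ k)) ^ ν ⟨i, h⟩) • Pi.basisFun (ZMod (p ^ k)) (Fin n) i
          else Pi.basisFun (ZMod (p ^ k)) (Fin n) i)
        = fun i => Pi.basisFun (ZMod (p ^ k)) (Fin n) i :=
      funext fun i => dif_neg (Nat.not_lt_zero _)
    rw [h1, h2]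
    exact ((Pi.basisFun (ZMod (p ^ k)) (Fin n)).span_eq).symm
  | succ r IH =>
    intro n ν F hrn hν hν1 hνk hF
    haveI : NeZero p := ⟨hp.pos.ne'⟩
    obtain ⟨m, rfl⟩ : ∃ m, n = m + 1 := ⟨n - 1, by omega⟩
    haveI : NeZero (p ^ k) := ⟨pow_ne_zero _ hp.pos.ne'⟩
    haveI : Finite (ZMod (p ^ k)) := Finite.of_fintype _
    have hdvd : ∀ j : Fin (r + 1), p ^ min (ν j) k ∣ p ^ k := fun j => pow_dvd_pow p (min_le_right _ _)
    let ρ : (j : Fin (r + 1)) → (ZMod (p ^ k)) →+* ZMod (p ^ min (ν j) k) := fun j => ZMod.castHom (hdvd j) _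
    have hsmul : ∀ (c : (ZMod (p ^ k))) (x : ∀ j : Fin (r + 1), ZMod (p ^ min (ν j) k)) (j : Fin (r + 1)),
        (c • x) j = ρ j c * x j := by
      intro c x j
      rw [zmod_pi_smul_apply, val_cast_eq_castHom (hdvd j)]
    let u : ∀ j : Fin (r + 1), ZMod (p ^ min (ν j) k) := Pi.single 0 1
    have hu0 : u 0 = 1 := Pi.single_eq_same 0 1
    have husucc : ∀ j : Fin r, u j.succ = 0 := fun j => Pi.single_eq_of_ne (Fin.succ_ne_zero j) 1
    obtain ⟨v, hv⟩ := hF u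
    -- some coordinate of v is a unit
    have hvu : ∃ i, IsUnit (v i) := by
      by_contra hcon
      push_neg at hcon
      have hdv : ∀ i, (p : (ZMod (p ^ k))) ∣ v i := by
        intro i
        rcases unit_or_p_dvd p k hp (v i) with h | h
        · exact absurd h (hcon i)
        · exact h
      choose w hw using hdv
      have hvw : v = (p : (ZMod (p ^ k))) • w := funext fun i => by
        rw [Pi.smul_apply, smul_eq_mul]; exact hw i
      have e1 : u = (p : (ZMod (p ^ k))) • F w := by rw [← hv, hvw, map_smul]
      have e2 := congrFun e1 0
      rw [hsmul] at e2
      haveI : NeZero (p ^ ν 0) := ⟨pow_ne_zero _ hp.pos.ne'⟩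
      have h1 : (1 : ZMod (p ^ min (ν 0) k)) = (p : ZMod (p ^ min (ν 0) k)) * F w 0 := by
        rw [← hu0]
        simpa [ρ, map_natCast] using e2
      have hunit : IsUnit (p : ZMod (p ^ min (ν 0) k)) := IsUnit.of_mul_eq_one _ h1.symm
      have hz : ((p : ZMod (p ^ min (ν 0) k))) ^ (min (ν 0) k) = 0 := by
        rw [← Nat.cast_pow, ZMod.natCast_self]
      have hminpos : 0 < min (ν 0) k := lt_min (hν1 0) hk
      haveI : Fact (1 < p ^ min (ν 0) k) := ⟨Nat.one_lt_pow hminpos.ne' hp.one_lt⟩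
      have := hunit.pow (min (ν 0) k)
      rw [hz] at this
      exact zero_ne_one (isUnit_zero_iff.mp this)
    obtain ⟨i0, hi0⟩ := hvu
    -- decomposition of vectors into single coordinates
    have hdecomp : ∀ x : Fin (m + 1) → (ZMod (p ^ k)), x = ∑ i, x i • (Pi.single i 1 : Fin (m + 1) → (ZMod (p ^ k))) := by
      intro x
      have hsing : ∀ i : Fin (m + 1), x i • (Pi.single i 1 : Fin (m + 1) → (ZMod (p ^ k))) = Pi.single i (x i) := by
        intro i; rw [← Pi.single_smul, smul_eq_mul, mul_one]
      rw [Finset.sum_congr rfl (fun i _ => hsing i), Finset.univ_sum_single]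
    -- a basis containing v
    let zc : Fin (m + 1) → (Fin (m + 1) → (ZMod (p ^ k))) := fun i => if i = i0 then v else Pi.single i 1
    have hzc : ⊤ ≤ span (ZMod (p ^ k)) (Set.range zc) := by
      have hsingle : ∀ i, (Pi.single i 1 : Fin (m + 1) → (ZMod (p ^ k))) ∈ span (ZMod (p ^ k)) (Set.range zc) := by
        intro i
        by_cases h : i = i0
        · subst h
          have hvmem : v ∈ span (ZMod (p ^ k)) (Set.range zc) := subset_span ⟨i, by simp [zc]⟩
          have hsum : v i • (Pi.single i 1 : Fin (m + 1) → (ZMod (p ^ k))) +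
              ∑ j ∈ Finset.univ.erase i, v j • (Pi.single j 1 : Fin (m + 1) → (ZMod (p ^ k))) = v := by
            rw [Finset.add_sum_erase Finset.univ
              (fun j => v j • (Pi.single j 1 : Fin (m + 1) → (ZMod (p ^ k)))) (Finset.mem_univ i)]
            exact (hdecomp v).symm
          have hmem2 : v i • (Pi.single i 1 : Fin (m + 1) → (ZMod (p ^ k))) ∈ span (ZMod (p ^ k)) (Set.range zc) := by
            have : v i • (Pi.single i 1 : Fin (m + 1) → (ZMod (p ^ k))) = v -
                ∑ j ∈ Finset.univ.erase i, v j • (Pi.single j 1 : Fin (m + 1) → (ZMod (p ^ k))) :=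
              eq_sub_of_add_eq hsum
            rw [this]
            refine sub_mem hvmem (sum_mem fun j hj => smul_mem _ _ (subset_span ⟨j, ?_⟩))
            simp [zc, Finset.ne_of_mem_erase hj]
          obtain ⟨vu, hvu'⟩ := hi0
          have : (Pi.single i 1 : Fin (m + 1) → (ZMod (p ^ k))) = ((vu⁻¹ : (ZMod (p ^ k))ˣ) : (ZMod (p ^ k))) • (v i • (Pi.single i 1 : Fin (m + 1) → (ZMod (p ^ k)))) := by
            rw [smul_smul, ← hvu', Units.inv_mul, one_smul]
          rw [this]
          exact smul_mem _ _ hmem2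
        · exact subset_span ⟨i, by simp [zc, h]⟩
      intro x _
      rw [hdecomp x]
      exact sum_mem fun i _ => smul_mem _ _ (hsingle i)
    obtain ⟨c, hc⟩ := basis_of_span zc hzc
    let c' := c.reindex (Equiv.swap i0 0)
    have hc'0 : c' 0 = v := by
      rw [Module.Basis.reindex_apply, Equiv.symm_swap, Equiv.swap_apply_right, hc]
      simp [zc]
    -- the inclusion of the complement
    let incl : (Fin m → (ZMod (p ^ k))) →ₗ[ZMod (p ^ k)] (Fin (m + 1) → (ZMod (p ^ k))) :=
      (Pi.basisFun (ZMod (p ^ k)) (Fin m)).constr ℕ (fun j => c' j.succ)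
    have hinclb : ∀ j, incl (Pi.basisFun (ZMod (p ^ k)) (Fin m) j) = c' j.succ :=
      fun j => (Pi.basisFun (ZMod (p ^ k)) (Fin m)).constr_basis ℕ _ j
    have hinclapply : ∀ w : Fin m → (ZMod (p ^ k)), incl w = ∑ j, w j • c' j.succ := by
      intro w
      rw [Module.Basis.constr_apply_fintype, Pi.basisFun_equivFun]
      rfl
    -- the quotient surjection G
    have hGadd : ∀ a b : Fin m → (ZMod (p ^ k)),
        (fun w => fun j : Fin r => F (incl w) j.succ) (a + b)
          = (fun w => fun j : Fin r => F (incl w) j.succ) a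
            + (fun w => fun j : Fin r => F (incl w) j.succ) b := by
      intro a b
      funext j
      simp [map_add]
    let Gadd : (Fin m → (ZMod (p ^ k))) →+ (∀ j : Fin r, ZMod (p ^ min (ν j.succ) k)) :=
      AddMonoidHom.mk' (fun w => fun j => F (incl w) j.succ) hGadd
    let G : (Fin m → (ZMod (p ^ k))) →ₗ[ZMod (p ^ k)] (∀ j : Fin r, ZMod (p ^ min (ν j.succ) k)) :=
      AddMonoidHom.toZModLinearMap (p ^ k) Gadd
    have hGapply : ∀ (w : Fin m → (ZMod (p ^ k))) (j : Fin r),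
        G w j = F (incl w) j.succ := fun w j => rfl
    have hsmul' : ∀ (d : (ZMod (p ^ k))) (x : ∀ j : Fin r, ZMod (p ^ min (ν j.succ) k)) (j : Fin r),
        (d • x) j = ρ j.succ d * x j := by
      intro d x j
      rw [zmod_pi_smul_apply, val_cast_eq_castHom (hdvd j.succ)]
    -- surjectivity of G
    have hG : Function.Surjective G := by
      intro h'
      obtain ⟨x, hx⟩ := hF (Fin.cases 0 h' : ∀ j : Fin (r + 1), ZMod (p ^ min (ν j) k))
      refine ⟨fun j => c'.repr x j.succ, ?_⟩
      have hdec : x = (c'.repr x 0) • c' 0 + incl (fun j => c'.repr x j.succ) := by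
        rw [hinclapply]
        conv_lhs => rw [← c'.sum_repr x, Fin.sum_univ_succ]
      have hgen : ∀ (a w : Fin (m + 1) → ZMod (p ^ k)), x = a + w → w = x - a := by
        intro a w h
        rw [h, add_sub_cancel_left]
      have hsub : incl (fun j => c'.repr x j.succ) = x - (c'.repr x 0) • c' 0 :=
        hgen _ _ hdec
      funext j
      rw [hGapply, hsub, map_sub, map_smul, hc'0, hv, hx, Pi.sub_apply, hsmul, husucc,
        mul_zero, sub_zero]
      exact Fin.cases_succ _
    -- induction hypothesis
    have hν' : Antitone (fun j : Fin r => ν j.succ) := fun a b hab => hν (Fin.succ_le_succ_iff.2 hab)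
    obtain ⟨b', hb'⟩ := IH m (fun j => ν j.succ) G (by omega) hν'
      (fun j => hν1 j.succ) (fun j => hνk j.succ) hG
    let D : Fin m → (ZMod (p ^ k)) := fun j =>
      if h : (j : ℕ) < r then (p : (ZMod (p ^ k))) ^ ν (Fin.succ ⟨j, h⟩) else 1
    have hker' : LinearMap.ker G
        = span (ZMod (p ^ k)) (Set.range fun j => D j • b' j) := by
      rw [hb']
      apply congrArg
      apply congrArg
      funext j
      by_cases h : (j : ℕ) < r <;> simp [D, h]
    let y : Fin m → (∀ j : Fin (r + 1), ZMod (p ^ min (ν j) k)) := fun j => F (incl (b' j))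
    let t : Fin m → (ZMod (p ^ k)) := fun j => ((ZMod.val (y j 0) : ℕ) : (ZMod (p ^ k)))
    let z : Fin (m + 1) → (Fin (m + 1) → (ZMod (p ^ k))) :=
      Fin.cases (c' 0) (fun j => incl (b' j) - t j • c' 0)
    haveI : NeZero (p ^ ν 0) := ⟨pow_ne_zero _ hp.pos.ne'⟩
    have hρt : ∀ j : Fin m, ρ 0 (t j) = y j 0 := by
      intro j
      show ρ 0 (((ZMod.val (y j 0) : ℕ) : (ZMod (p ^ k)))) = y j 0
      rw [map_natCast, ZMod.natCast_val, ZMod.cast_id]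
    have hz0 : z 0 = c' 0 := by simp [z]
    have hzsucc : ∀ j : Fin m, z j.succ = incl (b' j) - t j • c' 0 := by
      intro j; simp [z]
    have hFz0 : F (z 0) = u := by rw [hz0, hc'0, hv]
    have hFzsucc : ∀ j : Fin m, F (z j.succ) = y j - t j • u := by
      intro j
      rw [hzsucc, map_sub, map_smul, hc'0, hv]
    have hFzsucc0 : ∀ j : Fin m, F (z j.succ) 0 = 0 := by
      intro j
      rw [hFzsucc, Pi.sub_apply, hsmul, hρt, hu0, mul_one, sub_self]
    have hFzsuccsucc : ∀ (j' : Fin m) (i : Fin r), F (z j'.succ) i.succ = y j' i.succ := by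
      intro j' i
      rw [hFzsucc, Pi.sub_apply, hsmul, husucc, mul_zero, sub_zero]
    have hρ0pow : ρ 0 ((p : (ZMod (p ^ k))) ^ ν 0) = 0 := by
      rw [map_pow, map_natCast, ← Nat.cast_pow]
      exact (ZMod.natCast_eq_zero_iff _ _).2 (pow_dvd_pow p (min_le_left _ _))
    -- generators lie in the kernel
    have hgen0 : F ((p : (ZMod (p ^ k))) ^ ν 0 • z 0) = 0 := by
      rw [map_smul, hFz0]
      funext j
      rw [hsmul]
      refine Fin.cases ?_ ?_ j
      · rw [hu0, hρ0pow, zero_mul]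
        simp
      · intro j'
        rw [husucc, mul_zero]
        simp
    have hgensucc : ∀ j : Fin m, F (D j • z j.succ) = 0 := by
      intro j
      have hkerG : G (D j • b' j) = 0 := by
        have hmem : D j • b' j ∈ LinearMap.ker G := by
          rw [hker']; exact subset_span ⟨j, rfl⟩
        exact LinearMap.mem_ker.1 hmem
      rw [map_smul]
      funext i
      rw [hsmul]
      refine Fin.cases ?_ ?_ i
      · rw [hFzsucc0, mul_zero]
        simp
      · intro i'
        rw [hFzsuccsucc]
        have h2 : G (D j • b' j) i' = 0 := by rw [hkerG]; rfl
        rw [map_smul, hsmul'] at h2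
        exact h2
    let Dp : Fin (m + 1) → (ZMod (p ^ k)) :=
      Fin.cases ((p : (ZMod (p ^ k))) ^ ν 0) D
    have hDp0 : Dp 0 = (p : (ZMod (p ^ k))) ^ ν 0 := by simp [Dp]
    have hDpsucc : ∀ j : Fin m, Dp j.succ = D j := by intro j; simp [Dp]
    have hgens : ∀ i, F (Dp i • z i) = 0 := by
      intro i
      refine Fin.cases ?_ ?_ i
      · rw [hDp0]; exact hgen0
      · intro j; rw [hDpsucc]; exact hgensucc j
    -- z is a basis
    have hzmem : ∀ j : Fin m, incl (b' j) ∈ span (ZMod (p ^ k)) (Set.range z) := by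
      intro j
      have heq : incl (b' j) = z j.succ + t j • z 0 := by
        rw [hzsucc, hz0, sub_add_cancel]
      rw [heq]
      exact add_mem (subset_span ⟨j.succ, rfl⟩) (smul_mem _ _ (subset_span ⟨0, rfl⟩))
    have hspanz : ⊤ ≤ span (ZMod (p ^ k)) (Set.range z) := by
      have hc'mem : ∀ i, c' i ∈ span (ZMod (p ^ k)) (Set.range z) := by
        intro i
        refine Fin.cases ?_ ?_ i
        · rw [← hz0]; exact subset_span ⟨0, rfl⟩
        · intro j
          have h2 : Pi.basisFun (ZMod (p ^ k)) (Fin m) j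
              ∈ span (ZMod (p ^ k)) (Set.range b') := by
            rw [b'.span_eq]; trivial
          have h3 : incl (Pi.basisFun (ZMod (p ^ k)) (Fin m) j)
              ∈ Submodule.map incl (span (ZMod (p ^ k)) (Set.range b')) := ⟨_, h2, rfl⟩
          rw [Submodule.map_span] at h3
          have h4 : span (ZMod (p ^ k)) (⇑incl '' Set.range b')
              ≤ span (ZMod (p ^ k)) (Set.range z) := by
            rw [span_le]
            rintro _ ⟨_, ⟨j', rfl⟩, rfl⟩
            exact hzmem j'
          rw [← hinclb j]
          exact h4 h3
      intro x _
      have hxc : x ∈ span (ZMod (p ^ k)) (Set.range c') := by rw [c'.span_eq]; trivial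
      refine span_le.2 ?_ hxc
      rintro _ ⟨i, rfl⟩
      exact hc'mem i
    obtain ⟨bz, hbz⟩ := basis_of_span z hspanz
    refine ⟨bz, ?_⟩
    have hfuneq : (fun i : Fin (m + 1) => if h : (i : ℕ) < r + 1 then
          ((p : ZMod (p ^ k)) ^ ν ⟨i, h⟩) • bz i else bz i) = fun i => Dp i • z i := by
      funext i
      rw [hbz]
      refine Fin.cases ?_ ?_ i
      · rw [dif_pos (by simp : ((0 : Fin (m + 1)) : ℕ) < r + 1), hDp0]
        norm_num
      · intro j
        by_cases hj : (j : ℕ) < r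
        · have h2 : ((j.succ : Fin (m + 1)) : ℕ) < r + 1 := by
            simpa using Nat.succ_lt_succ hj
          rw [dif_pos h2, hDpsucc]
          show _ = (if h : (j : ℕ) < r then
            (p : (ZMod (p ^ k))) ^ ν (Fin.succ ⟨j, h⟩) else 1) • z j.succ
          rw [dif_pos hj]
          rfl
        · have h2 : ¬ ((j.succ : Fin (m + 1)) : ℕ) < r + 1 := by
            simpa using hj
          rw [dif_neg h2, hDpsucc]
          show _ = (if h : (j : ℕ) < r then
            (p : (ZMod (p ^ k))) ^ ν (Fin.succ ⟨j, h⟩) else 1) • z j.succ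
          rw [dif_neg hj, one_smul]
    rw [hfuneq]
    apply le_antisymm
    · -- hard direction : ker ≤ span
      intro x hx
      have hx0 : F x = 0 := LinearMap.mem_ker.1 hx
      have hxsum : x = ∑ i, bz.repr x i • z i := by
        conv_lhs => rw [← bz.sum_repr x]
        exact Finset.sum_congr rfl fun i _ => by rw [hbz]
      have hcomp : ∀ i : Fin (r + 1),
          ∑ j : Fin (m + 1), ρ i (bz.repr x j) * F (z j) i = 0 := by
        intro i
        have hFs : F x = ∑ j, bz.repr x j • F (z j) := by
          conv_lhs => rw [hxsum]
          rw [map_sum]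
          exact Finset.sum_congr rfl fun j _ => by rw [map_smul]
        have h5 : (∑ j, bz.repr x j • F (z j)) i = 0 := by rw [← hFs, hx0]; rfl
        rw [Finset.sum_apply] at h5
        rw [← h5]
        exact Finset.sum_congr rfl fun j _ => (hsmul _ _ _).symm
      have hdvd0 : Dp 0 ∣ bz.repr x 0 := by
        have h0 := hcomp 0
        rw [Fin.sum_univ_succ] at h0
        have hterm : ∀ j : Fin m, ρ 0 (bz.repr x j.succ) * F (z j.succ) 0 = 0 := fun j => by
          rw [hFzsucc0, mul_zero]
        rw [Finset.sum_congr rfl (fun j _ => hterm j), Finset.sum_const_zero, add_zero,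
          hFz0, hu0, mul_one] at h0
        have hval : p ^ ν 0 ∣ (bz.repr x 0).val := by
          rw [← min_eq_left (hνk 0)]
          refine (ZMod.natCast_eq_zero_iff _ _).1 ?_
          rw [val_cast_eq_castHom (hdvd 0)]
          exact h0
        obtain ⟨d, hd⟩ := hval
        refine ⟨(d : ZMod (p ^ k)), ?_⟩
        have hback : (((bz.repr x 0).val : ℕ) : ZMod (p ^ k)) = bz.repr x 0 := by
          rw [ZMod.natCast_val, ZMod.cast_id]
        rw [← hback, hd, hDp0]
        push_cast
        ring
      have hdvdsucc : ∀ j : Fin m, Dp j.succ ∣ bz.repr x j.succ := by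
        intro j
        rw [hDpsucc]
        have hGW : G (∑ j' : Fin m, bz.repr x j'.succ • b' j') = 0 := by
          funext i
          have h1 := hcomp i.succ
          rw [Fin.sum_univ_succ] at h1
          have e0 : ρ i.succ (bz.repr x 0) * F (z 0) i.succ = 0 := by
            rw [hFz0, husucc, mul_zero]
          rw [e0, zero_add] at h1
          rw [Finset.sum_congr rfl
            (fun j' _ => by rw [hFzsuccsucc] :
              ∀ j' ∈ Finset.univ, ρ i.succ (bz.repr x j'.succ) * F (z j'.succ) i.succ
                = ρ i.succ (bz.repr x j'.succ) * y j' i.succ)] at h1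
          rw [map_sum, Finset.sum_apply]
          have h3 : ∀ j' : Fin m, (G (bz.repr x j'.succ • b' j')) i
              = ρ i.succ (bz.repr x j'.succ) * y j' i.succ := by
            intro j'
            rw [map_smul, hsmul']
            rfl
          rw [Finset.sum_congr rfl (fun j' _ => h3 j')]
          simpa using h1
        have hWmem : (∑ j' : Fin m, bz.repr x j'.succ • b' j') ∈ LinearMap.ker G :=
          LinearMap.mem_ker.2 hGW
        rw [hker'] at hWmem
        have hdj := dvd_repr_of_mem_span b' D hWmem j
        rwa [congrFun (b'.repr_sum_self fun j' => bz.repr x j'.succ) j] at hdj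
      have hdvdall : ∀ i, Dp i ∣ bz.repr x i := by
        intro i
        refine Fin.cases ?_ ?_ i
        · exact hdvd0
        · exact hdvdsucc
      rw [hxsum]
      refine sum_mem fun i _ => ?_
      obtain ⟨d, hd⟩ := hdvdall i
      rw [hd, mul_comm (Dp i) d, ← smul_smul]
      exact smul_mem _ _ (subset_span ⟨i, rfl⟩)
    · rw [span_le]
      rintro _ ⟨i, rfl⟩
      exact LinearMap.mem_ker.2 (hgens i)


/-- Smith-normal-form structure of the kernel of a surjection from a free module over
`ℤ/p^k`: if `H` has type `ν` with `r` parts, there is a basis `z` of `V = R^n` such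
that `ker F1` is generated by `p^{ν_1} z_1, …, p^{ν_r} z_r, z_{r+1}, …, z_n`. -/
theorem stmt14 (p : ℕ) (hp : p.Prime) (k r n : ℕ) (hk : 1 ≤ k) (hrn : r ≤ n)
    (ν : Fin r → ℕ) (hν : Antitone ν) (hν1 : ∀ j, 1 ≤ ν j) (hνk : ∀ j, ν j ≤ k)
    (H : Type*) [AddCommGroup H] [Module (ZMod (p ^ k)) H]
    (e : H ≃+ ∀ j : Fin r, ZMod (p ^ ν j))
    (F1 : (Fin n → ZMod (p ^ k)) →ₗ[ZMod (p ^ k)] H)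
    (hF1 : Function.Surjective F1) :
    ∃ b : Module.Basis (Fin n) (ZMod (p ^ k)) (Fin n → ZMod (p ^ k)),
      LinearMap.ker F1 = Submodule.span (ZMod (p ^ k))
        (Set.range (fun i : Fin n =>
          if h : (i : ℕ) < r then ((p : ZMod (p ^ k)) ^ ν ⟨i, h⟩) • b i else b i)) := by
  haveI : NeZero p := ⟨hp.pos.ne'⟩
  haveI : NeZero (p ^ k) := ⟨pow_ne_zero _ hp.pos.ne'⟩
  have hcast : ∀ j : Fin r, ZMod (p ^ ν j) ≃+ ZMod (p ^ min (ν j) k) := by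
    intro j
    rw [min_eq_left (hνk j)]
  let Emin : H ≃+ ∀ j : Fin r, ZMod (p ^ min (ν j) k) :=
    e.trans (AddEquiv.piCongrRight hcast)
  let F' : (Fin n → ZMod (p ^ k)) →ₗ[ZMod (p ^ k)] (∀ j : Fin r, ZMod (p ^ min (ν j) k)) :=
    AddMonoidHom.toZModLinearMap (p ^ k) (Emin.toAddMonoidHom.comp F1.toAddMonoidHom)
  have hF' : Function.Surjective F' := fun y => by
    obtain ⟨x, hx⟩ := hF1 (Emin.symm y)
    exact ⟨x, by show Emin (F1 x) = y; rw [hx, AddEquiv.apply_symm_apply]⟩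
  obtain ⟨b, hb⟩ := key p k hp hk r n ν F' hrn hν hν1 hνk hF'
  refine ⟨b, ?_⟩
  rw [← hb]
  ext x
  simp only [LinearMap.mem_ker]
  show F1 x = 0 ↔ Emin (F1 x) = 0
  constructor
  · intro h; rw [h, map_zero]
  · intro h; exact Emin.injective (by rw [h, map_zero])
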